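/- Let p ≥ 7 be a prime and let a, b, t be integers with gcd(p, abt) = 1. Then the Birch sum B(at, bt; p) is nonzero; moreover, if B(a,b;p)/B(at,bt;p) is a rational number, then t ≡ 1 (mod p) or t ≡ −1 (mod p). -/

import Mathlib

/-- `e(t) = exp(2πit)`. -/
noncomputable def eC (t : ℂ) : ℂ := Complex.exp (2 * Real.pi * Complex.I * t)

/-- The Birch sum `B(a,b;c) = Σ_{x mod c} e((a x³ + b x)/c)`. -/
noncomputable def birch (a b : ℤ) (c : ℕ) : ℂ :=
  ∑ x ∈ Finset.range c, eC (((a : ℂ) * (x : ℂ) ^ 3 + (b : ℂ) * (x : ℂ)) / (c : ℂ))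

namespace S16

open Polynomial Finset

noncomputable def zeta (p : ℕ) : ℂ := Complex.exp (2 * Real.pi * Complex.I / p)

noncomputable def bpoly (a b : ℤ) (p : ℕ) : Polynomial ℤ :=
  ∑ x ∈ Finset.range p, Polynomial.X ^ ((a * (x : ℤ) ^ 3 + b * (x : ℤ)) % (p : ℤ)).toNat

lemma zeta_pow (p : ℕ) (hp : p ≠ 0) (m : ℤ) :
    eC ((m : ℂ) / p) = zeta p ^ ((m % (p : ℤ)).toNat) := by
  have hζ : IsPrimitiveRoot (zeta p) p := Complex.isPrimitiveRoot_exp p hp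
  have hne : zeta p ≠ 0 := Complex.exp_ne_zero _
  have h1 : eC ((m : ℂ) / p) = zeta p ^ (m : ℤ) := by
    rw [eC, zeta, ← Complex.exp_int_mul]
    ring_nf
  have hmod : ((m % (p : ℤ)).toNat : ℤ) = m % (p : ℤ) :=
    Int.toNat_of_nonneg (Int.emod_nonneg m (by exact_mod_cast hp))
  rw [h1, ← zpow_natCast, hmod]
  have : m = (p : ℤ) * (m / p) + m % p := (Int.mul_ediv_add_emod m p).symm
  conv_lhs => rw [this]
  rw [zpow_add₀ hne, zpow_mul, zpow_natCast, hζ.pow_eq_one]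
  simp

lemma birch_eq (p : ℕ) (hp : p ≠ 0) (a b : ℤ) :
    birch a b p = Polynomial.aeval (zeta p) (bpoly a b p) := by
  rw [birch, bpoly, map_sum]
  apply Finset.sum_congr rfl
  intro x _
  rw [map_pow, Polynomial.aeval_X, ← zeta_pow p hp]
  norm_num

lemma cycl_eq (p : ℕ) [hpf : Fact p.Prime] :
    Polynomial.cyclotomic p (ZMod p) = (Polynomial.X - 1) ^ (p - 1) := by
  have h := Polynomial.cyclotomic_prime_mul_X_sub_one (ZMod p) p
  have h2 : (Polynomial.X - 1 : (ZMod p)[X]) ^ p = Polynomial.X ^ p - 1 ^ p :=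
    sub_pow_char _ _
  have hX : (Polynomial.X - 1 : (ZMod p)[X]) ≠ 0 := by
    have : (Polynomial.X - 1 : (ZMod p)[X]) = Polynomial.X - Polynomial.C 1 := by simp
    rw [this]
    exact Polynomial.X_sub_C_ne_zero 1
  apply mul_right_cancel₀ hX
  rw [one_pow] at h2
  rw [h, ← pow_succ]
  have hpp : p - 1 + 1 = p := by have := hpf.out.pos; omega
  rw [hpp, h2]

lemma ncast (p : ℕ) [NeZero p] (m : ℤ) :
    (((m % (p : ℤ)).toNat : ℕ) : ZMod p) = (m : ZMod p) := by
  have hp : ((p : ℤ)) ≠ 0 := by exact_mod_cast NeZero.ne p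
  have h0 : (0:ℤ) ≤ m % p := Int.emod_nonneg m hp
  have h1 : (((m % (p : ℤ)).toNat : ℕ) : ZMod p) = (((m % (p : ℤ)) : ℤ) : ZMod p) := by
    rw [← Int.cast_natCast, Int.toNat_of_nonneg h0]
  rw [h1, ZMod.intCast_eq_intCast_iff]
  exact Int.emod_emod_of_dvd m dvd_rfl

lemma cast_choose (p : ℕ) [NeZero p] (n k : ℕ) :
    ((k.factorial : ℕ) : ZMod p) * ((n.choose k : ℕ) : ZMod p)
      = ∏ i ∈ range k, ((n : ZMod p) - (i : ZMod p)) := by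
  rcases le_or_gt k n with hkn | hnk
  · have hnat : k.factorial * n.choose k = n.descFactorial k := by
      rw [Nat.descFactorial_eq_factorial_mul_choose]
    have : ((k.factorial * n.choose k : ℕ) : ZMod p) = ((n.descFactorial k : ℕ) : ZMod p) := by
      rw [hnat]
    rw [Nat.cast_mul] at this
    rw [this, Nat.descFactorial_eq_prod_range, Nat.cast_prod]
    apply Finset.prod_congr rfl
    intro i hi
    have : i ≤ n := le_trans (le_of_lt (mem_range.mp hi)) hkn
    rw [Nat.cast_sub this]
  · rw [Nat.choose_eq_zero_of_lt hnk, Nat.cast_zero, mul_zero]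
    symm
    apply Finset.prod_eq_zero (Finset.mem_range.mpr hnk)
    simp

lemma sum_range_zmod (p : ℕ) [NeZero p] {M : Type*} [AddCommMonoid M] (h : ZMod p → M) :
    ∑ x ∈ range p, h ((x : ℕ) : ZMod p) = ∑ y : ZMod p, h y := by
  apply Finset.sum_nbij' (i := fun x => ((x : ℕ) : ZMod p)) (j := fun y => y.val)
  · intro a _; exact Finset.mem_univ _
  · intro y _; exact Finset.mem_range.mpr (ZMod.val_lt y)
  · intro a ha; exact ZMod.val_cast_of_lt (Finset.mem_range.mp ha)
  · intro y _; exact ZMod.natCast_rightInverse y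
  · intro a _; rfl

lemma coeff_vanish {p : ℕ} [hpf : Fact p.Prime] {Q : Polynomial ℤ}
    (hQ : Polynomial.aeval (zeta p) Q = 0) {k : ℕ} (hk : k < p - 1) :
    (Polynomial.taylor 1 (Q.map (Int.castRingHom (ZMod p)))).coeff k = 0 := by
  have hp0 : 0 < p := hpf.out.pos
  have hζ : IsPrimitiveRoot (zeta p) p := Complex.isPrimitiveRoot_exp p hp0.ne'
  have hdvd : Polynomial.cyclotomic p ℤ ∣ Q := by
    rw [Polynomial.cyclotomic_eq_minpoly hζ hp0]
    exact minpoly.isIntegrallyClosed_dvd (hζ.isIntegral hp0) hQ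
  have hdvd2 : (Polynomial.X - 1 : (ZMod p)[X]) ^ (p - 1) ∣ Q.map (Int.castRingHom (ZMod p)) := by
    have h2 := Polynomial.map_dvd (Int.castRingHom (ZMod p)) hdvd
    rwa [Polynomial.map_cyclotomic, cycl_eq] at h2
  obtain ⟨R, hR⟩ := hdvd2
  have htay : Polynomial.taylor 1 (Q.map (Int.castRingHom (ZMod p)))
      = Polynomial.X ^ (p - 1) * Polynomial.taylor 1 R := by
    rw [hR, Polynomial.taylor_apply, Polynomial.taylor_apply, Polynomial.mul_comp,
      Polynomial.pow_comp, Polynomial.sub_comp, Polynomial.X_comp, Polynomial.one_comp]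
    simp
  have : Polynomial.X ^ (p - 1) ∣ Polynomial.taylor 1 (Q.map (Int.castRingHom (ZMod p))) :=
    ⟨_, htay⟩
  exact Polynomial.X_pow_dvd_iff.mp this k hk

lemma sum_pow_zmod (p : ℕ) [hpf : Fact p.Prime] (m : ℕ) :
    ∑ y : ZMod p, y ^ m = if m ≠ 0 ∧ (p - 1) ∣ m then -1 else 0 := by
  classical
  have hcard : Fintype.card (ZMod p) = p := ZMod.card p
  rcases eq_or_ne m 0 with rfl | hm
  · simp only [pow_zero, Finset.sum_const, Finset.card_univ, hcard, nsmul_one]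
    rw [if_neg (by simp)]
    exact ZMod.natCast_self p
  · have key : ∑ y : ZMod p, y ^ m = ∑ x : (ZMod p)ˣ, ((x : ZMod p)) ^ m := by
      let φ : (ZMod p)ˣ ↪ ZMod p := ⟨fun x ↦ x, fun _ _ h => Units.ext h⟩
      have huniv : Finset.univ.map φ = Finset.univ \ {(0 : ZMod p)} := by
        ext x
        simp only [Finset.mem_map, Finset.mem_univ, Function.Embedding.coeFn_mk, true_and,
          Finset.mem_sdiff, Finset.mem_singleton, φ]
        exact isUnit_iff_ne_zero
      calc ∑ y : ZMod p, y ^ m = ∑ y ∈ Finset.univ \ {(0 : ZMod p)}, y ^ m := by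
            rw [← Finset.sum_sdiff (Finset.subset_univ {(0 : ZMod p)}), Finset.sum_singleton,
              zero_pow hm, add_zero]
          _ = ∑ x : (ZMod p)ˣ, ((x : ZMod p)) ^ m := by
            rw [← huniv, Finset.sum_map]
            rfl
    rw [key]
    have h2 := FiniteField.sum_pow_units (ZMod p) m
    rw [hcard] at h2
    rw [h2]
    simp [hm]

lemma F_eq (p : ℕ) [Fact p.Prime] (A B : ZMod p) (j : ℕ) :
    ∑ y : ZMod p, (A * y ^ 3 + B * y) ^ j
      = ∑ i ∈ range (j + 1), (j.choose i : ZMod p) * (A ^ i * B ^ (j - i)) *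
          (if 2 * i + j ≠ 0 ∧ (p - 1) ∣ (2 * i + j) then -1 else 0) := by
  have hterm : ∀ y : ZMod p, (A * y ^ 3 + B * y) ^ j
      = ∑ i ∈ range (j + 1), (j.choose i : ZMod p) * (A ^ i * B ^ (j - i)) * y ^ (2 * i + j) := by
    intro y
    rw [add_pow]
    apply Finset.sum_congr rfl
    intro i hi
    have hij : i ≤ j := Nat.lt_succ_iff.mp (mem_range.mp hi)
    have h3 : 2 * i + j = 3 * i + (j - i) := by omega
    rw [h3, pow_add, mul_pow, mul_pow, ← pow_mul]
    ring
  simp_rw [hterm]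
  rw [Finset.sum_comm]
  apply Finset.sum_congr rfl
  intro i _
  rw [← Finset.mul_sum, sum_pow_zmod]

lemma key_coeff (p : ℕ) [Fact p.Prime] (u v : ℤ) (k : ℕ) :
    ((k.factorial : ℕ) : ZMod p) *
        (Polynomial.taylor 1 ((bpoly u v p).map (Int.castRingHom (ZMod p)))).coeff k
      = ∑ y : ZMod p, ∏ i ∈ range k, ((u : ZMod p) * y ^ 3 + (v : ZMod p) * y - (i : ZMod p)) := by
  haveI : NeZero p := ⟨(Fact.out : p.Prime).ne_zero⟩
  have h1 : (Polynomial.taylor 1 ((bpoly u v p).map (Int.castRingHom (ZMod p)))).coeff k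
      = ∑ x ∈ range p,
          ((((u * (x:ℤ)^3 + v*(x:ℤ)) % (p:ℤ)).toNat.choose k : ℕ) : ZMod p) := by
    rw [bpoly, Polynomial.map_sum, map_sum, Polynomial.finset_sum_coeff]
    apply Finset.sum_congr rfl
    intro x _
    rw [Polynomial.map_pow, Polynomial.map_X, Polynomial.taylor_apply, Polynomial.X_pow_comp]
    rw [show (Polynomial.C (1 : ZMod p)) = 1 from map_one _, Polynomial.coeff_X_add_one_pow]
  rw [h1, Finset.mul_sum]
  have h2 : ∀ x ∈ range p,
      ((k.factorial : ℕ) : ZMod p) * ((((u * (x:ℤ)^3 + v*(x:ℤ)) % (p:ℤ)).toNat.choose k : ℕ) : ZMod p)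
      = ∏ i ∈ range k, ((u : ZMod p) * ((x:ℕ) : ZMod p) ^ 3 + (v : ZMod p) * ((x:ℕ):ZMod p) - (i : ZMod p)) := by
    intro x _
    rw [cast_choose]
    apply Finset.prod_congr rfl
    intro i _
    rw [ncast]
    push_cast
    ring_nf
  rw [Finset.sum_congr rfl h2]
  exact sum_range_zmod p
    (fun y => ∏ i ∈ range k, ((u : ZMod p) * y ^ 3 + (v : ZMod p) * y - (i : ZMod p)))

lemma arith1 (p : ℕ) (hp : Nat.Prime p) (h7 : 7 ≤ p) : p % 6 = 1 ∨ p % 6 = 5 := by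
  have h2 : ¬ 2 ∣ p := by
    intro hd
    rcases (Nat.Prime.eq_one_or_self_of_dvd hp 2 hd) with h | h <;> omega
  have h3 : ¬ 3 ∣ p := by
    intro hd
    rcases (Nat.Prime.eq_one_or_self_of_dvd hp 3 hd) with h | h <;> omega
  omega

lemma arith2 (p : ℕ) (hp : Nat.Prime p) (h7 : 7 ≤ p) :
    (2 * ((p + 4) / 6) + 2 < p - 1) ∧
    (∀ j ≤ 2 * ((p + 4) / 6) + 2, ∀ i ≤ j, (p - 1) ∣ (2 * i + j) → 2 * i + j ≠ 0 →
      ((j = 2 * ((p + 4) / 6) ∧ i = (p - 1 - 2 * ((p + 4) / 6)) / 2) ∨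
        (j = 2 * ((p + 4) / 6) + 2 ∧ i = (p - 1 - 2 * ((p + 4) / 6)) / 2 - 1) ∨
        (p = 7 ∧ j = 4 ∧ i = 4))) := by
  have hp6 := arith1 p hp h7
  constructor
  · omega
  · intro j hj i hi hdvd hne
    obtain ⟨c, hc⟩ := hdvd
    have h1 : 2 * i + j ≤ 3 * (2 * ((p + 4) / 6)) + 6 := by omega
    have hcle : c < 3 := by
      by_contra hc3
      have h3 : (p - 1) * 3 ≤ (p - 1) * c := Nat.mul_le_mul_left _ (by omega)
      omega
    interval_cases c <;> omega

lemma choose_cast_ne (p : ℕ) [hpf : Fact p.Prime] {k i : ℕ} (hk : k < p) (hik : i ≤ k) :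
    ((k.choose i : ℕ) : ZMod p) ≠ 0 := by
  rw [Ne, ZMod.natCast_eq_zero_iff]
  intro hdvd
  have heq := Nat.choose_mul_factorial_mul_factorial hik
  have hd2 : p ∣ k.factorial := heq ▸ (hdvd.mul_right _).mul_right _
  have := (Nat.Prime.dvd_factorial hpf.out).mp hd2
  omega

lemma p7_dec : ∀ (A B : ZMod 7), A ≠ 0 → B ≠ 0 →
    ¬∑ x : ZMod 7, (A * x ^ 3 + B * x) ^ 4 = 0 := by decide

lemma Ffacts (p : ℕ) [hpf : Fact p.Prime] (h7 : 7 ≤ p) (A B : ZMod p)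
    (hA : A ≠ 0) (hB : B ≠ 0) :
    (∀ j ≤ 2 * ((p + 4) / 6) + 2, j ≠ 2 * ((p + 4) / 6) → j ≠ 2 * ((p + 4) / 6) + 2 →
        ∑ y : ZMod p, (A * y ^ 3 + B * y) ^ j = 0)
    ∧ (∑ y : ZMod p, (A * y ^ 3 + B * y) ^ (2 * ((p + 4) / 6))) ≠ 0
    ∧ (∑ y : ZMod p, (A * y ^ 3 + B * y) ^ (2 * ((p + 4) / 6) + 2)) ≠ 0 := by
  obtain ⟨hlt, harith⟩ := arith2 p hpf.out h7
  have hp6 := arith1 p hpf.out h7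
  refine ⟨?_, ?_, ?_⟩
  · intro j hj hjk0 hjk1
    rw [F_eq]
    apply Finset.sum_eq_zero
    intro i hi
    rw [if_neg, mul_zero]
    rintro ⟨hne, hdvd⟩
    have hij : i ≤ j := Nat.lt_succ_iff.mp (mem_range.mp hi)
    rcases harith j hj i hij hdvd hne with hc | hc | hc <;> omega
  · rw [F_eq]
    rw [Finset.sum_eq_single ((p - 1 - 2 * ((p + 4) / 6)) / 2)]
    · rw [if_pos ⟨by omega, by exact ⟨1, by omega⟩⟩]
      apply mul_ne_zero (mul_ne_zero _ (mul_ne_zero (pow_ne_zero _ hA) (pow_ne_zero _ hB)))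
      · simp
      · exact choose_cast_ne p (by omega) (by omega)
    · intro i hi hine
      rw [if_neg, mul_zero]
      rintro ⟨hne, hdvd⟩
      have hij : i ≤ 2 * ((p + 4) / 6) := Nat.lt_succ_iff.mp (mem_range.mp hi)
      rcases harith _ (by omega) i hij hdvd hne with hc | hc | hc <;> omega
    · intro habs
      exfalso
      exact habs (mem_range.mpr (by omega))
  · by_cases hp7 : p = 7
    · subst hp7
      have h4 : 2 * ((7 + 4) / 6) + 2 = 4 := by norm_num
      rw [h4]
      exact p7_dec A B hA hB
    · rw [F_eq]
      rw [Finset.sum_eq_single ((p - 1 - 2 * ((p + 4) / 6)) / 2 - 1)]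
      · rw [if_pos ⟨by omega, by exact ⟨1, by omega⟩⟩]
        apply mul_ne_zero (mul_ne_zero _ (mul_ne_zero (pow_ne_zero _ hA) (pow_ne_zero _ hB)))
        · simp
        · exact choose_cast_ne p (by omega) (by omega)
      · intro i hi hine
        rw [if_neg, mul_zero]
        rintro ⟨hne, hdvd⟩
        have hij : i ≤ 2 * ((p + 4) / 6) + 2 := Nat.lt_succ_iff.mp (mem_range.mp hi)
        rcases harith _ (by omega) i hij hdvd hne with hc | hc | hc <;> omega
      · intro habs
        exfalso
        exact habs (mem_range.mpr (by omega))

lemma keyfacts (p : ℕ) [Fact p.Prime] (h7 : 7 ≤ p) (A B : ZMod p)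
    (hA : A ≠ 0) (hB : B ≠ 0) :
    ∃ U V c : ZMod p, U ≠ 0 ∧ V ≠ 0 ∧
      ∀ T : ZMod p,
        ((∑ y : ZMod p, ∏ i ∈ range (2 * ((p + 4) / 6)),
            (T * (A * y ^ 3 + B * y) - (i : ZMod p))) = T ^ (2 * ((p + 4) / 6)) * U) ∧
        ((∑ y : ZMod p, ∏ i ∈ range (2 * ((p + 4) / 6) + 2),
            (T * (A * y ^ 3 + B * y) - (i : ZMod p)))
          = T ^ (2 * ((p + 4) / 6) + 2) * V + c * (T ^ (2 * ((p + 4) / 6)) * U)) := by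
  obtain ⟨hz, hU, hV⟩ := Ffacts p h7 A B hA hB
  refine ⟨_, _, (∏ i ∈ range (2 * ((p + 4) / 6) + 2),
      (Polynomial.X - Polynomial.C (i : ZMod p))).coeff (2 * ((p + 4) / 6)), hU, hV, ?_⟩
  intro T
  have expand : ∀ k : ℕ,
      (∑ y : ZMod p, ∏ i ∈ range k, (T * (A * y ^ 3 + B * y) - (i : ZMod p)))
        = T ^ k * (∑ y : ZMod p, (A * y ^ 3 + B * y) ^ k)
          + ∑ j ∈ range k,
              (∏ i ∈ range k, (Polynomial.X - Polynomial.C (i : ZMod p))).coeff j *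
                (T ^ j * ∑ y : ZMod p, (A * y ^ 3 + B * y) ^ j) := by
    intro k
    have hmonic : (∏ i ∈ range k, (Polynomial.X - Polynomial.C (i : ZMod p))).Monic :=
      monic_prod_of_monic _ _ (fun i _ => monic_X_sub_C _)
    have hdeg : (∏ i ∈ range k, (Polynomial.X - Polynomial.C (i : ZMod p))).natDegree = k := by
      rw [Polynomial.natDegree_prod _ _ (fun i _ => Polynomial.X_sub_C_ne_zero _)]
      have hdeg1 : ∀ x ∈ range k, (Polynomial.X - Polynomial.C ((x : ZMod p))).natDegree = 1 :=
        fun x _ => Polynomial.natDegree_X_sub_C _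
      rw [Finset.sum_congr rfl hdeg1, Finset.sum_const, Finset.card_range, smul_eq_mul, mul_one]
    have hg : ∀ z : ZMod p, ∏ i ∈ range k, (z - (i : ZMod p))
        = z ^ k + ∑ j ∈ range k,
            (∏ i ∈ range k, (Polynomial.X - Polynomial.C (i : ZMod p))).coeff j * z ^ j := by
      intro z
      have heval : (∏ i ∈ range k, (Polynomial.X - Polynomial.C (i : ZMod p))).eval z
          = ∏ i ∈ range k, (z - (i : ZMod p)) := by
        simp [Polynomial.eval_prod]
      have hck := hmonic.coeff_natDegree
      rw [hdeg] at hck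
      rw [← heval, Polynomial.eval_eq_sum_range' (n := k + 1) (by omega), Finset.sum_range_succ,
        hck, one_mul, add_comm]
    calc ∑ y : ZMod p, ∏ i ∈ range k, (T * (A * y ^ 3 + B * y) - (i : ZMod p))
        = ∑ y : ZMod p, ((T * (A * y ^ 3 + B * y)) ^ k
            + ∑ j ∈ range k,
              (∏ i ∈ range k, (Polynomial.X - Polynomial.C (i : ZMod p))).coeff j *
                (T * (A * y ^ 3 + B * y)) ^ j) := by
          exact Finset.sum_congr rfl (fun y _ => hg _)
      _ = _ := by
          rw [Finset.sum_add_distrib]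
          congr 1
          · rw [Finset.mul_sum]
            exact Finset.sum_congr rfl (fun y _ => by rw [mul_pow])
          · rw [Finset.sum_comm]
            apply Finset.sum_congr rfl
            intro j _
            simp_rw [Finset.mul_sum]
            apply Finset.sum_congr rfl
            intro y _
            rw [mul_pow]
  constructor
  · have hzero : ∑ j ∈ range (2 * ((p + 4) / 6)),
        (∏ i ∈ range (2 * ((p + 4) / 6)), (Polynomial.X - Polynomial.C (i : ZMod p))).coeff j *
          (T ^ j * ∑ y : ZMod p, (A * y ^ 3 + B * y) ^ j) = 0 := by
      apply Finset.sum_eq_zero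
      intro j hj
      have hjlt := Finset.mem_range.mp hj
      rw [hz j (by omega) (by omega) (by omega)]
      ring
    rw [expand, hzero, add_zero]
  · have hsingle : ∑ j ∈ range (2 * ((p + 4) / 6) + 2),
        (∏ i ∈ range (2 * ((p + 4) / 6) + 2), (Polynomial.X - Polynomial.C (i : ZMod p))).coeff j *
          (T ^ j * ∑ y : ZMod p, (A * y ^ 3 + B * y) ^ j)
        = (∏ i ∈ range (2 * ((p + 4) / 6) + 2), (Polynomial.X - Polynomial.C (i : ZMod p))).coeff
              (2 * ((p + 4) / 6)) *
            (T ^ (2 * ((p + 4) / 6)) * ∑ y : ZMod p, (A * y ^ 3 + B * y) ^ (2 * ((p + 4) / 6))) := by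
      apply Finset.sum_eq_single
      · intro j hj hjne
        have hjlt := Finset.mem_range.mp hj
        rw [hz j (by omega) hjne (by omega)]
        ring
      · intro habs
        exact absurd (Finset.mem_range.mpr (by omega)) habs
    rw [expand, hsingle]


end S16

open Polynomial Finset S16 in

theorem stmt16 (p : ℕ) (hp : p.Prime) (hp7 : 7 ≤ p) (a b t : ℤ)
    (h : Int.gcd (a * b * t) p = 1) :
    birch (a * t) (b * t) p ≠ 0 ∧
      ((∃ r : ℚ, birch a b p / birch (a * t) (b * t) p = (r : ℂ)) →
        (t ≡ 1 [ZMOD (p : ℤ)] ∨ t ≡ -1 [ZMOD (p : ℤ)])) := by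
  haveI hpf : Fact p.Prime := ⟨hp⟩
  have hp0 : p ≠ 0 := hp.pos.ne'
  have hpabt : ¬ (p : ℤ) ∣ (a * b * t) := by
    intro hd
    have h2 := Int.dvd_gcd hd (dvd_refl (p : ℤ))
    rw [h] at h2
    have := Nat.le_of_dvd one_pos h2
    omega
  have hA : ((a : ℤ) : ZMod p) ≠ 0 := by
    rw [Ne, ZMod.intCast_zmod_eq_zero_iff_dvd]
    exact fun hd => hpabt ((hd.mul_right b).mul_right t)
  have hB : ((b : ℤ) : ZMod p) ≠ 0 := by
    rw [Ne, ZMod.intCast_zmod_eq_zero_iff_dvd]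
    exact fun hd => hpabt ((hd.mul_left a).mul_right t)
  have hT : ((t : ℤ) : ZMod p) ≠ 0 := by
    rw [Ne, ZMod.intCast_zmod_eq_zero_iff_dvd]
    exact fun hd => hpabt (hd.mul_left (a * b))
  obtain ⟨U, V, c, hU, hV, hUV⟩ := keyfacts p hp7 (a : ZMod p) (b : ZMod p) hA hB
  obtain ⟨hklt, _⟩ := arith2 p hp hp7
  have hm1 : ∀ k : ℕ,
      (∑ y : ZMod p, ∏ i ∈ range k,
        (((a * t : ℤ) : ZMod p) * y ^ 3 + ((b * t : ℤ) : ZMod p) * y - (i : ZMod p)))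
      = ∑ y : ZMod p, ∏ i ∈ range k,
          ((t : ZMod p) * ((a : ZMod p) * y ^ 3 + (b : ZMod p) * y) - (i : ZMod p)) := by
    intro k
    apply Finset.sum_congr rfl; intro y _
    apply Finset.prod_congr rfl; intro i _
    push_cast
    ring
  have hm2 : ∀ k : ℕ,
      (∑ y : ZMod p, ∏ i ∈ range k,
        ((a : ZMod p) * y ^ 3 + (b : ZMod p) * y - (i : ZMod p)))
      = ∑ y : ZMod p, ∏ i ∈ range k,
          ((1 : ZMod p) * ((a : ZMod p) * y ^ 3 + (b : ZMod p) * y) - (i : ZMod p)) := by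
    intro k
    apply Finset.sum_congr rfl; intro y _
    apply Finset.prod_congr rfl; intro i _
    rw [one_mul]
  have main_ne : ∀ (u v : ℤ) (T : ZMod p), T ≠ 0 →
      ((∑ y : ZMod p, ∏ i ∈ range (2 * ((p + 4) / 6)),
          ((u : ZMod p) * y ^ 3 + (v : ZMod p) * y - (i : ZMod p)))
        = T ^ (2 * ((p + 4) / 6)) * U) → birch u v p ≠ 0 := by
    intro u v T hTne hsum h0
    have hQ : Polynomial.aeval (zeta p) (bpoly u v p) = 0 := by
      rw [← birch_eq p hp0 u v]; exact h0
    have hcv := coeff_vanish hQ (k := 2 * ((p + 4) / 6)) (by omega)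
    have hkc := key_coeff p u v (2 * ((p + 4) / 6))
    rw [hcv, mul_zero] at hkc
    rw [hsum] at hkc
    exact (mul_ne_zero (pow_ne_zero _ hTne) hU) hkc.symm
  have part1 : birch (a * t) (b * t) p ≠ 0 :=
    main_ne (a * t) (b * t) (t : ZMod p) hT
      ((hm1 _).trans (hUV (t : ZMod p)).1)
  have part1' : birch a b p ≠ 0 :=
    main_ne a b 1 one_ne_zero ((hm2 _).trans (hUV 1).1)
  refine ⟨part1, ?_⟩
  rintro ⟨r, hr⟩
  rw [div_eq_iff part1] at hr
  have hr0 : r ≠ 0 := by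
    intro h0
    rw [h0] at hr
    simp at hr
    exact part1' hr
  have heq : (((r.den : ℤ) : ℂ)) * birch a b p = ((r.num : ℂ)) * birch (a * t) (b * t) p := by
    have hden : ((r.den : ℂ)) ≠ 0 := Nat.cast_ne_zero.mpr r.den_pos.ne'
    rw [hr, Rat.cast_def]
    push_cast
    field_simp
  set Q : Polynomial ℤ := Polynomial.C (r.den : ℤ) * bpoly a b p
      - Polynomial.C r.num * bpoly (a * t) (b * t) p with hQdef
  have hQ0 : Polynomial.aeval (zeta p) Q = 0 := by
    rw [hQdef, map_sub, map_mul, map_mul, Polynomial.aeval_C, Polynomial.aeval_C,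
      ← birch_eq p hp0, ← birch_eq p hp0]
    simp only [algebraMap_int_eq, eq_intCast]
    rw [sub_eq_zero]
    exact heq
  have hcoeffs : ∀ k : ℕ, k < p - 1 →
      ((r.den : ℤ) : ZMod p) * (∑ y : ZMod p, ∏ i ∈ range k,
          ((a : ZMod p) * y ^ 3 + (b : ZMod p) * y - (i : ZMod p)))
        = ((r.num : ℤ) : ZMod p) * (∑ y : ZMod p, ∏ i ∈ range k,
          (((a * t : ℤ) : ZMod p) * y ^ 3 + ((b * t : ℤ) : ZMod p) * y - (i : ZMod p))) := by
    intro k hk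
    have hcv := coeff_vanish (Q := Q) hQ0 hk
    have hexp : (Polynomial.taylor 1 (Q.map (Int.castRingHom (ZMod p)))).coeff k
        = ((r.den : ℤ) : ZMod p) *
            (Polynomial.taylor 1 ((bpoly a b p).map (Int.castRingHom (ZMod p)))).coeff k
          - ((r.num : ℤ) : ZMod p) *
            (Polynomial.taylor 1 ((bpoly (a * t) (b * t) p).map (Int.castRingHom (ZMod p)))).coeff k := by
      rw [hQdef, Polynomial.map_sub, Polynomial.map_mul, Polynomial.map_mul,
        Polynomial.map_C, Polynomial.map_C, map_sub, ← Polynomial.smul_eq_C_mul,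
        ← Polynomial.smul_eq_C_mul, map_smul, map_smul, Polynomial.coeff_sub,
        Polynomial.coeff_smul, Polynomial.coeff_smul, smul_eq_mul, smul_eq_mul]
      simp [Int.coe_castRingHom]
    rw [hexp] at hcv
    have hgoal := key_coeff p a b k
    have hgoal2 := key_coeff p (a * t) (b * t) k
    linear_combination ((k.factorial : ℕ) : ZMod p) * hcv
      + ((r.num : ℤ) : ZMod p) * hgoal2 - ((r.den : ℤ) : ZMod p) * hgoal
  have E1 := hcoeffs (2 * ((p + 4) / 6)) (by omega)
  have E2 := hcoeffs (2 * ((p + 4) / 6) + 2) (by omega)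
  rw [hm2 _, (hUV 1).1, hm1 _, (hUV (t : ZMod p)).1] at E1
  rw [hm2 _, (hUV 1).2, hm1 _, (hUV (t : ZMod p)).2] at E2
  have hn' : ((r.num : ℤ) : ZMod p) ≠ 0 := by
    intro h0
    rw [h0, zero_mul] at E1
    have hd' : ((r.den : ℤ) : ZMod p) = 0 := by
      rcases mul_eq_zero.mp E1 with h | h
      · exact h
      · exact absurd h (mul_ne_zero (pow_ne_zero _ one_ne_zero) hU)
    have hpn : (p : ℤ) ∣ r.num := (ZMod.intCast_zmod_eq_zero_iff_dvd _ _).mp h0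
    have hpd : (p : ℤ) ∣ (r.den : ℤ) := (ZMod.intCast_zmod_eq_zero_iff_dvd _ _).mp hd'
    have h1 : p ∣ r.num.natAbs := by
      have := Int.natAbs_dvd_natAbs.mpr hpn
      simpa using this
    have h2 : p ∣ r.den := Int.natCast_dvd_natCast.mp hpd
    have := Nat.dvd_gcd h1 h2
    rw [r.reduced] at this
    have := Nat.le_of_dvd one_pos this
    omega
  have hdeq : ((r.den : ℤ) : ZMod p) = ((r.num : ℤ) : ZMod p) * ((t : ℤ) : ZMod p) ^ (2 * ((p + 4) / 6)) := by
    apply mul_right_cancel₀ hU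
    rw [one_pow, one_mul] at E1
    rw [E1]
    ring
  rw [hdeq] at E2
  have hsq : ((t : ℤ) : ZMod p) ^ 2 = 1 := by
    have hne : ((r.num : ℤ) : ZMod p) * ((t : ℤ) : ZMod p) ^ (2 * ((p + 4) / 6)) * V ≠ 0 :=
      mul_ne_zero (mul_ne_zero hn' (pow_ne_zero _ hT)) hV
    have h3 : ((r.num : ℤ) : ZMod p) * ((t : ℤ) : ZMod p) ^ (2 * ((p + 4) / 6)) * V * ((t : ℤ) : ZMod p) ^ 2
        = ((r.num : ℤ) : ZMod p) * ((t : ℤ) : ZMod p) ^ (2 * ((p + 4) / 6)) * V * 1 := by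
      rw [one_pow, one_mul] at E2
      linear_combination -E2
    exact mul_left_cancel₀ hne h3
  have hsq' : ((t : ℤ) : ZMod p) * ((t : ℤ) : ZMod p) = 1 := by
    rw [← sq]; exact hsq
  rcases mul_self_eq_one_iff.mp hsq' with h1 | h1
  · left
    rw [← ZMod.intCast_eq_intCast_iff]
    rw [Int.cast_one]
    exact h1
  · right
    rw [← ZMod.intCast_eq_intCast_iff]
    rw [Int.cast_neg, Int.cast_one]
    exact h1
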